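/- Let H be a Hermitian positive semi-definite matrix and let A ⊆ A' be two index subsets with H_{A'} positive definite, and k ∉ A'. Then H_{{k}×A} (H_A)^{-1} H_{A×{k}} ≤ H_{{k}×A'} (H_{A'})^{-1} H_{A'×{k}}. -/

import Mathlib

/-- The principal submatrix of `K` indexed by a finite subset `A`. -/
noncomputable def subMat {N : ℕ} (K : Matrix (Fin N) (Fin N) ℝ) (A : Finset (Fin N)) :
    Matrix A A ℝ :=
  K.submatrix (fun i : A => (i : Fin N)) (fun j : A => (j : Fin N))

/-- The quadratic form `M_{{k}×A} (M_A)⁻¹ M_{A×{k}}` (zero when `A = ∅`). -/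
noncomputable def quadForm {N : ℕ} (M : Matrix (Fin N) (Fin N) ℝ) (A : Finset (Fin N))
    (k : Fin N) : ℝ :=
  ∑ i : A, ∑ j : A, M k (i : Fin N) * (subMat M A)⁻¹ i j * M (j : Fin N) k

open Matrix Finset

/-- Key inequality: for `M` positive definite real, `2⟨v,x⟩ - xᵀMx ≤ vᵀM⁻¹v`. -/
lemma key_le {n : Type*} [Fintype n] [DecidableEq n] (M : Matrix n n ℝ) (hM : M.PosDef)
    (v x : n → ℝ) : 2 * (v ⬝ᵥ x) - x ⬝ᵥ M *ᵥ x ≤ v ⬝ᵥ M⁻¹ *ᵥ v := by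
  have hsym : Mᵀ = M := by
    ext i j; simpa using hM.1.apply i j
  set y : n → ℝ := M⁻¹ *ᵥ v with hy
  have hinv : M * M⁻¹ = 1 := by
    have := hM.isUnit.invertible
    exact Matrix.mul_inv_of_invertible M
  have hMy : M *ᵥ y = v := by
    rw [hy, mulVec_mulVec, hinv, one_mulVec]
  have hnn : 0 ≤ (y - x) ⬝ᵥ M *ᵥ (y - x) := by
    simpa using hM.posSemidef.dotProduct_mulVec_nonneg (y - x)
  have hvm : ∀ a : n → ℝ, a ᵥ* M = M *ᵥ a := by
    intro a
    conv_lhs => rw [← hsym]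
    exact vecMul_transpose M a
  have hcross : ∀ a b : n → ℝ, a ⬝ᵥ M *ᵥ b = b ⬝ᵥ M *ᵥ a := by
    intro a b
    rw [dotProduct_mulVec, hvm, dotProduct_comm]
  have hexp : (y - x) ⬝ᵥ M *ᵥ (y - x)
      = y ⬝ᵥ M *ᵥ y - 2 * (x ⬝ᵥ M *ᵥ y) + x ⬝ᵥ M *ᵥ x := by
    rw [mulVec_sub, dotProduct_sub, sub_dotProduct, sub_dotProduct, hcross y x]
    ring
  have h1 : y ⬝ᵥ M *ᵥ y = v ⬝ᵥ y := by rw [hMy, dotProduct_comm]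
  have h2 : x ⬝ᵥ M *ᵥ y = v ⬝ᵥ x := by rw [hMy, dotProduct_comm]
  have h3 : v ⬝ᵥ M⁻¹ *ᵥ v = v ⬝ᵥ y := rfl
  rw [h1, h2] at hexp
  linarith [hnn, hexp.symm ▸ hnn]

lemma key_eq {n : Type*} [Fintype n] [DecidableEq n] (M : Matrix n n ℝ) (hM : M.PosDef)
    (v : n → ℝ) :
    v ⬝ᵥ M⁻¹ *ᵥ v = 2 * (v ⬝ᵥ (M⁻¹ *ᵥ v)) - (M⁻¹ *ᵥ v) ⬝ᵥ M *ᵥ (M⁻¹ *ᵥ v) := by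
  have hinv : M * M⁻¹ = 1 := by
    have := hM.isUnit.invertible
    exact Matrix.mul_inv_of_invertible M
  have hMy : M *ᵥ (M⁻¹ *ᵥ v) = v := by rw [mulVec_mulVec, hinv, one_mulVec]
  rw [hMy]
  rw [dotProduct_comm (M⁻¹ *ᵥ v) v]
  ring

/-- Sum over `A'` of a function vanishing outside `A` equals the sum over `A`. -/
lemma sum_restrict {N : ℕ} {A A' : Finset (Fin N)} (h : A ⊆ A') (F : A' → ℝ)
    (hF : ∀ i : A', (i : Fin N) ∉ A → F i = 0) :
    ∑ i : A', F i = ∑ i : A, F ⟨i, h i.2⟩ := by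
  classical
  rw [← Finset.sum_filter_of_ne (p := fun i : A' => (i : Fin N) ∈ A)
      (fun x _ hx => by by_contra hc; exact hx (hF x hc))]
  refine Finset.sum_bij' (fun (i : A') (hi : i ∈ Finset.univ.filter fun i : A' => (i : Fin N) ∈ A)
      => (⟨(i : Fin N), (Finset.mem_filter.mp hi).2⟩ : A))
    (fun (i : A) _ => (⟨(i : Fin N), h i.2⟩ : A')) ?_ ?_ ?_ ?_ ?_ <;>
    simp

/-- Extension of a vector on `A` to `A'` by zero. -/
noncomputable def ext0 {N : ℕ} {A A' : Finset (Fin N)} (h : A ⊆ A') (x : A → ℝ) : A' → ℝ :=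
  fun i => if hi : (i : Fin N) ∈ A then x ⟨i, hi⟩ else 0

lemma ext0_mem {N : ℕ} {A A' : Finset (Fin N)} (h : A ⊆ A') (x : A → ℝ) (i : A) :
    ext0 h x ⟨i, h i.2⟩ = x i := by
  simp [ext0]

lemma ext0_not_mem {N : ℕ} {A A' : Finset (Fin N)} (h : A ⊆ A') (x : A → ℝ) (i : A')
    (hi : (i : Fin N) ∉ A) : ext0 h x i = 0 := by
  simp [ext0, hi]

lemma dot_ext {N : ℕ} {A A' : Finset (Fin N)} (h : A ⊆ A') (w : A' → ℝ) (x : A → ℝ) :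
    w ⬝ᵥ ext0 h x = (fun i : A => w ⟨i, h i.2⟩) ⬝ᵥ x := by
  unfold dotProduct
  rw [sum_restrict h (fun i => w i * ext0 h x i)
      (fun i hi => by simp only [ext0_not_mem h x i hi, mul_zero])]
  exact Finset.sum_congr rfl fun i _ => by rw [ext0_mem]

lemma quad_ext {N : ℕ} {A A' : Finset (Fin N)} (h : A ⊆ A') (K : Matrix (Fin N) (Fin N) ℝ)
    (x y : A → ℝ) :
    ext0 h x ⬝ᵥ (subMat K A') *ᵥ ext0 h y = x ⬝ᵥ (subMat K A) *ᵥ y := by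
  unfold dotProduct mulVec
  rw [sum_restrict h (fun i => ext0 h x i * ((fun j => subMat K A' i j) ⬝ᵥ ext0 h y))
      (fun i hi => by simp only [ext0_not_mem h x i hi, zero_mul])]
  refine Finset.sum_congr rfl fun i _ => ?_
  rw [ext0_mem]
  congr 1
  unfold dotProduct
  rw [sum_restrict h (fun j => subMat K A' ⟨i, h i.2⟩ j * ext0 h y j)
      (fun j hj => by simp only [ext0_not_mem h y j hj, mul_zero])]
  exact Finset.sum_congr rfl fun j _ => by rw [ext0_mem]; rfl

/-- Monotonicity of the quadratic form: if `H` is symmetric PSD, `A ⊆ A'`, `H_{A'}` is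
positive definite and `k ∉ A'`, then
`H_{{k}×A} (H_A)⁻¹ H_{A×{k}} ≤ H_{{k}×A'} (H_{A'})⁻¹ H_{A'×{k}}`. -/
theorem quadform_monotone {N : ℕ} (H : Matrix (Fin N) (Fin N) ℝ)
    (hH : H.PosSemidef) (A A' : Finset (Fin N)) (hAA' : A ⊆ A')
    (hHA' : (subMat H A').PosDef) (k : Fin N) (hk : k ∉ A') :
    quadForm H A k ≤ quadForm H A' k := by
  classical
  have hsymH : ∀ i j, H i j = H j i := fun i j => by simpa using (hH.1.apply i j).symm
  set v : A → ℝ := fun i => H (i : Fin N) k with hv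
  set v' : A' → ℝ := fun i => H (i : Fin N) k with hv'
  -- quadForm as dot product
  have hq : ∀ (B : Finset (Fin N)),
      quadForm H B k = (fun i : B => H (i : Fin N) k) ⬝ᵥ (subMat H B)⁻¹ *ᵥ
        (fun i : B => H (i : Fin N) k) := by
    intro B
    unfold quadForm dotProduct mulVec dotProduct
    refine Finset.sum_congr rfl fun i _ => ?_
    rw [Finset.mul_sum]
    refine Finset.sum_congr rfl fun j _ => ?_
    rw [hsymH k (i : Fin N)]
    ring
  -- H_A is positive definite
  have hMpd : (subMat H A).PosDef := by
    refine posDef_iff_dotProduct_mulVec.mpr ⟨?_, ?_⟩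
    · ext i j
      simp only [conjTranspose_apply, star_trivial]
      exact hsymH _ _
    · intro x hx
      have hx' : ext0 hAA' x ≠ 0 := by
        intro hc
        apply hx
        funext i
        have := congrFun hc ⟨i, hAA' i.2⟩
        rwa [ext0_mem] at this
      have := hHA'.dotProduct_mulVec_pos hx'
      simpa [quad_ext hAA' H x x] using this
  set M : Matrix A A ℝ := subMat H A with hM
  set M' : Matrix A' A' ℝ := subMat H A' with hM'
  set x : A → ℝ := M⁻¹ *ᵥ v with hx
  have heq : quadForm H A k = 2 * (v ⬝ᵥ x) - x ⬝ᵥ M *ᵥ x := by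
    rw [hq A]; exact key_eq M hMpd v
  have hle : 2 * (v' ⬝ᵥ ext0 hAA' x) - ext0 hAA' x ⬝ᵥ M' *ᵥ ext0 hAA' x
      ≤ v' ⬝ᵥ M'⁻¹ *ᵥ v' := key_le M' hHA' v' (ext0 hAA' x)
  have h1 : v' ⬝ᵥ ext0 hAA' x = v ⬝ᵥ x := by
    rw [dot_ext hAA' v' x]
  have h2 : ext0 hAA' x ⬝ᵥ M' *ᵥ ext0 hAA' x = x ⬝ᵥ M *ᵥ x := quad_ext hAA' H x x
  rw [hq A']
  rw [h1, h2] at hle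
  linarith [heq.le, heq.ge, hle]
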